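/- Let K be a (possibly noncommutative) left noetherian ring (IsNoetherianRing K), and let C_K be the category of finitely generated free left K-modules: objects are natural numbers n, and morphisms from n to m are K-linear maps (Fin n → K) →ₗ[K] (Fin m → K). Then every automorphism F of C_K is semiinner: there exist a ring automorphism σ : K ≃+* K and, for each n, an additive bijection s_n : (Fin n → K) ≃+ (Fin (F.obj n) → K) satisfying s_n (c • x) = σ c • s_n x for all c : K, such that for every morphism f from n to m and every x : Fin n → K, (F.map f) (s_n x) = s_m (f x). -/

import Mathlib

open CategoryTheory

universe u

/-- Objects of the category of finitely generated free left `K`-modules: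
natural numbers. -/
structure FreeModCat (K : Type u) [Ring K] where
  n : ℕ

variable (K : Type u) [Ring K]

/-- The category of finitely generated free left `K`-modules: morphisms from
`n` to `m` are `K`-linear maps `(Fin n → K) →ₗ[K] (Fin m → K)`. -/
instance : Category (FreeModCat K) where
  Hom a b := (Fin a.n → K) →ₗ[K] (Fin b.n → K)
  id a := LinearMap.id
  comp f g := g.comp f

/-- View a morphism of the category as a `K`-linear map. -/
def FreeModCat.toLinearMap {a b : FreeModCat K} (f : a ⟶ b) :
    (Fin a.n → K) →ₗ[K] (Fin b.n → K) := f

namespace FMAux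

variable {K}

/-- apply a morphism -/
abbrev tl {a b : FreeModCat K} (f : a ⟶ b) : (Fin a.n → K) →ₗ[K] (Fin b.n → K) := f

lemma tl_comp {a b c : FreeModCat K} (f : a ⟶ b) (g : b ⟶ c) (x : Fin a.n → K) :
    tl (f ≫ g) x = tl g (tl f x) := rfl

lemma tl_id {a : FreeModCat K} (x : Fin a.n → K) : tl (𝟙 a) x = x := rfl

/-- split mono relation -/
def Sp (a b : FreeModCat K) : Prop := ∃ (f : a ⟶ b) (g : b ⟶ a), f ≫ g = 𝟙 a

lemma sp_map (F : FreeModCat K ⥤ FreeModCat K) {a b : FreeModCat K} (h : Sp a b) :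
    Sp (F.obj a) (F.obj b) := by
  obtain ⟨f, g, hfg⟩ := h
  exact ⟨F.map f, F.map g, by rw [← F.map_comp, hfg, F.map_id]⟩

lemma sp_iff_le [IsNoetherianRing K] [Nontrivial K] (a b : FreeModCat K) :
    Sp a b ↔ a.n ≤ b.n := by
  constructor
  · rintro ⟨f, g, hfg⟩
    by_contra hlt
    push_neg at hlt
    set π : (Fin a.n → K) →ₗ[K] (Fin b.n → K) :=
      LinearMap.funLeft K K (Fin.castLE hlt.le)
    have hπ : Function.Surjective π :=
      LinearMap.funLeft_surjective_of_injective K K _ (Fin.strictMono_castLE hlt.le).injective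
    have hg : Function.Surjective (tl g) := by
      intro y
      exact ⟨tl f y, by rw [← tl_comp, hfg, tl_id]⟩
    have hsurj : Function.Surjective ((tl g).comp π) := hg.comp hπ
    have hinj := IsNoetherian.injective_of_surjective_endomorphism _ hsurj
    set j0 : Fin a.n := ⟨b.n, hlt⟩
    have h1 : ((tl g).comp π) (Pi.single j0 1) = ((tl g).comp π) 0 := by
      have : π (Pi.single j0 1) = 0 := by
        funext i
        simp only [π, LinearMap.funLeft_apply]
        rw [Pi.single_apply, if_neg, Pi.zero_apply]
        intro hEq
        have : (Fin.castLE hlt.le i : ℕ) = b.n := congrArg Fin.val hEq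
        simp [Fin.castLE] at this
        omega
      simp [LinearMap.comp_apply, this]
    have := hinj h1
    have h2 := congrFun this j0
    simp at h2
  · intro h
    refine ⟨LinearMap.pi (fun j : Fin b.n =>
      if hj : (j : ℕ) < a.n then LinearMap.proj (⟨j, hj⟩ : Fin a.n) else 0),
      LinearMap.funLeft K K (Fin.castLE h), ?_⟩
    apply LinearMap.ext
    intro x
    funext i
    have : tl (LinearMap.pi (fun j : Fin b.n =>
        if hj : (j : ℕ) < a.n then LinearMap.proj (⟨j, hj⟩ : Fin a.n) else 0)
        ≫ LinearMap.funLeft K K (Fin.castLE h)) x i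
        = x i := by
      rw [tl_comp]
      simp only [LinearMap.funLeft_apply, LinearMap.pi_apply]
      rw [dif_pos (by exact i.isLt)]
      rfl
    exact this

section Main

variable [IsNoetherianRing K] [Nontrivial K]

lemma obj_eq (F G : FreeModCat K ⥤ FreeModCat K)
    (hFG : F ⋙ G = 𝟭 (FreeModCat K)) (hGF : G ⋙ F = 𝟭 (FreeModCat K))
    (a : FreeModCat K) : F.obj a = a := by
  have key : ∀ n : ℕ, (F.obj ⟨n⟩).n = n := by
    have mono : ∀ (H : FreeModCat K ⥤ FreeModCat K) {n m : ℕ}, n ≤ m →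
        (H.obj ⟨n⟩).n ≤ (H.obj ⟨m⟩).n := by
      intro H n m h
      exact (sp_iff_le _ _).mp (sp_map H ((sp_iff_le (⟨n⟩ : FreeModCat K) ⟨m⟩).mpr h))
    have hψφ : ∀ n : ℕ, (G.obj ⟨(F.obj ⟨n⟩).n⟩).n = n := by
      intro n
      have : (⟨(F.obj ⟨n⟩).n⟩ : FreeModCat K) = F.obj ⟨n⟩ := rfl
      rw [this]
      exact congrArg FreeModCat.n (Functor.congr_obj hFG ⟨n⟩)
    have hφψ : ∀ n : ℕ, (F.obj ⟨(G.obj ⟨n⟩).n⟩).n = n := by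
      intro n
      have : (⟨(G.obj ⟨n⟩).n⟩ : FreeModCat K) = G.obj ⟨n⟩ := rfl
      rw [this]
      exact congrArg FreeModCat.n (Functor.congr_obj hGF ⟨n⟩)
    intro n
    have hφinj : Function.Injective (fun n : ℕ => (F.obj ⟨n⟩).n) :=
      Function.LeftInverse.injective (g := fun n : ℕ => (G.obj ⟨n⟩).n) hψφ
    have hψinj : Function.Injective (fun n : ℕ => (G.obj ⟨n⟩).n) :=
      Function.LeftInverse.injective (g := fun n : ℕ => (F.obj ⟨n⟩).n) hφψ
    have hφsm : StrictMono (fun n : ℕ => (F.obj ⟨n⟩).n) :=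
      Monotone.strictMono_of_injective (fun _ _ h => mono F h) hφinj
    have hψsm : StrictMono (fun n : ℕ => (G.obj ⟨n⟩).n) :=
      Monotone.strictMono_of_injective (fun _ _ h => mono G h) hψinj
    refine le_antisymm ?_ hφsm.le_apply
    have h1 : n ≤ (G.obj ⟨n⟩).n := hψsm.le_apply
    have h2 := mono F h1
    rwa [hφψ n] at h2
  cases a with
  | mk n =>
    have h := key n
    have : (⟨(F.obj ⟨n⟩).n⟩ : FreeModCat K) = F.obj ⟨n⟩ := rfl
    rw [← this, h]

variable (F G : FreeModCat K ⥤ FreeModCat K)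

def phi (hFG : F ⋙ G = 𝟭 (FreeModCat K)) (hGF : G ⋙ F = 𝟭 (FreeModCat K))
    {a b : FreeModCat K} (f : a ⟶ b) : a ⟶ b :=
  eqToHom (obj_eq F G hFG hGF a).symm ≫ F.map f ≫ eqToHom (obj_eq F G hFG hGF b)

variable {F G}
variable (hFG : F ⋙ G = 𝟭 (FreeModCat K)) (hGF : G ⋙ F = 𝟭 (FreeModCat K))

lemma phi_comp {a b c : FreeModCat K} (f : a ⟶ b) (g : b ⟶ c) :
    phi F G hFG hGF (f ≫ g) = phi F G hFG hGF f ≫ phi F G hFG hGF g := by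
  simp [phi]

lemma phi_id (a : FreeModCat K) : phi F G hFG hGF (𝟙 a) = 𝟙 a := by
  simp [phi]

lemma phi_left_inv {a b : FreeModCat K} (f : a ⟶ b) :
    phi G F hGF hFG (phi F G hFG hGF f) = f := by
  have h := Functor.congr_hom hFG f
  simp only [Functor.comp_map, Functor.id_map] at h
  simp [phi, eqToHom_map, h]

lemma phi_inj {a b : FreeModCat K} : Function.Injective (phi F G hFG hGF (a := a) (b := b)) :=
  Function.LeftInverse.injective (g := phi G F hGF hFG) (phi_left_inv hFG hGF)

lemma phi_surj {a b : FreeModCat K} : Function.Surjective (phi F G hFG hGF (a := a) (b := b)) :=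
  Function.RightInverse.surjective (g := phi G F hGF hFG) (phi_left_inv hGF hFG)

section Add

instance homAddCommGroup (a b : FreeModCat K) : AddCommGroup (a ⟶ b) :=
  inferInstanceAs (AddCommGroup ((Fin a.n → K) →ₗ[K] (Fin b.n → K)))

lemma tl_add {a b : FreeModCat K} (f g : a ⟶ b) (x : Fin a.n → K) :
    tl (f + g) x = tl f x + tl g x := rfl

lemma tl_zero {a b : FreeModCat K} (x : Fin a.n → K) : tl (0 : a ⟶ b) x = 0 := rfl

lemma add_comp' {u v w : FreeModCat K} (x y : u ⟶ v) (z : v ⟶ w) :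
    (x + y) ≫ z = x ≫ z + y ≫ z := by
  apply LinearMap.ext; intro t
  show tl ((x+y) ≫ z) t = tl (x ≫ z + y ≫ z) t
  rw [tl_comp, tl_add, tl_add, tl_comp, tl_comp]
  exact map_add (tl z) _ _

lemma comp_add' {u v w : FreeModCat K} (z : u ⟶ v) (x y : v ⟶ w) :
    z ≫ (x + y) = z ≫ x + z ≫ y := by
  apply LinearMap.ext; intro t
  show tl (z ≫ (x + y)) t = tl (z ≫ x + z ≫ y) t
  rw [tl_comp, tl_add, tl_add, tl_comp, tl_comp]

lemma tl_sub {a b : FreeModCat K} (f g : a ⟶ b) (x : Fin a.n → K) :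
    tl (f - g) x = tl f x - tl g x := rfl

lemma comp_sub' {u v w : FreeModCat K} (z : u ⟶ v) (x y : v ⟶ w) :
    z ≫ (x - y) = z ≫ x - z ≫ y := by
  apply LinearMap.ext; intro t
  show tl (z ≫ (x - y)) t = tl (z ≫ x - z ≫ y) t
  rw [tl_comp, tl_sub, tl_sub, tl_comp, tl_comp]

lemma zero_comp' {u v w : FreeModCat K} (z : v ⟶ w) :
    (0 : u ⟶ v) ≫ z = 0 := by
  apply LinearMap.ext; intro t
  show tl ((0 : u ⟶ v) ≫ z) t = tl (0 : u ⟶ w) t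
  rw [tl_comp, tl_zero, tl_zero, map_zero]

lemma comp_zero' {u v w : FreeModCat K} (z : u ⟶ v) :
    z ≫ (0 : v ⟶ w) = 0 := by
  apply LinearMap.ext; intro t
  show tl (z ≫ (0 : v ⟶ w)) t = tl (0 : u ⟶ w) t
  rw [tl_comp, tl_zero, tl_zero]

lemma hom_to_zero_subsingleton (a : FreeModCat K) :
    Subsingleton (a ⟶ (⟨0⟩ : FreeModCat K)) := by
  constructor
  intro f g
  apply LinearMap.ext; intro x
  funext i
  exact i.elim0

lemma hom_from_zero_subsingleton (a : FreeModCat K) :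
    Subsingleton ((⟨0⟩ : FreeModCat K) ⟶ a) := by
  constructor
  intro f g
  apply LinearMap.ext; intro x
  have hx : x = 0 := by funext i; exact i.elim0
  rw [hx, map_zero, map_zero]

end Add

section Phi2

variable [IsNoetherianRing K] [Nontrivial K]
variable {F G : FreeModCat K ⥤ FreeModCat K}
variable (hFG : F ⋙ G = 𝟭 (FreeModCat K)) (hGF : G ⋙ F = 𝟭 (FreeModCat K))

lemma phi_zero {a b : FreeModCat K} : phi F G hFG hGF (0 : a ⟶ b) = 0 := by
  have hf : (0 : a ⟶ b) = (0 : a ⟶ ⟨0⟩) ≫ (0 : (⟨0⟩ : FreeModCat K) ⟶ b) := by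
    rw [zero_comp']
  rw [hf, phi_comp]
  have h1 : phi F G hFG hGF (0 : a ⟶ ⟨0⟩) = 0 :=
    (hom_to_zero_subsingleton a).elim _ _
  have h2 : phi F G hFG hGF (0 : (⟨0⟩ : FreeModCat K) ⟶ b) = 0 :=
    (hom_from_zero_subsingleton b).elim _ _
  rw [h1, h2, zero_comp']

lemma phi_add {a b : FreeModCat K} (f g : a ⟶ b) :
    phi F G hFG hGF (f + g) = phi F G hFG hGF f + phi F G hFG hGF g := by
  set d : FreeModCat K := ⟨a.n + a.n⟩ with hd
  let e : (Fin d.n → K) ≃ₗ[K] (Fin a.n → K) × (Fin a.n → K) :=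
    (LinearEquiv.funCongrLeft K K finSumFinEquiv).trans
      (LinearEquiv.sumArrowLequivProdArrow _ _ K K)
  let i₁ : a ⟶ d := (e.symm.toLinearMap).comp (LinearMap.inl K _ _)
  let i₂ : a ⟶ d := (e.symm.toLinearMap).comp (LinearMap.inr K _ _)
  let p₁ : d ⟶ a := (LinearMap.fst K _ _).comp e.toLinearMap
  let p₂ : d ⟶ a := (LinearMap.snd K _ _).comp e.toLinearMap
  have r11 : i₁ ≫ p₁ = 𝟙 a := by
    apply LinearMap.ext; intro x
    show (e (e.symm (x, 0))).1 = x
    rw [e.apply_symm_apply]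
  have r22 : i₂ ≫ p₂ = 𝟙 a := by
    apply LinearMap.ext; intro x
    show (e (e.symm (0, x))).2 = x
    rw [e.apply_symm_apply]
  have r12 : i₁ ≫ p₂ = 0 := by
    apply LinearMap.ext; intro x
    show (e (e.symm (x, 0))).2 = 0
    rw [e.apply_symm_apply]
  have r21 : i₂ ≫ p₁ = 0 := by
    apply LinearMap.ext; intro x
    show (e (e.symm (0, x))).1 = 0
    rw [e.apply_symm_apply]
  have r5 : p₁ ≫ i₁ + p₂ ≫ i₂ = 𝟙 d := by
    apply LinearMap.ext; intro y
    show e.symm ((e y).1, 0) + e.symm (0, (e y).2) = y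
    rw [← map_add]
    have : ((e y).1, (0 : Fin a.n → K)) + ((0 : Fin a.n → K), (e y).2) = e y := by
      rw [Prod.mk_add_mk, add_zero, zero_add]
    rw [this, e.symm_apply_apply]
  have je : ∀ {c : FreeModCat K} (w : d ⟶ c), i₁ ≫ w = 0 → i₂ ≫ w = 0 → w = 0 := by
    intro c w h1 h2
    have : w = (p₁ ≫ i₁ + p₂ ≫ i₂) ≫ w := by rw [r5, Category.id_comp]
    rw [this, add_comp', Category.assoc, Category.assoc, h1, h2, comp_zero', comp_zero',
      add_zero]
  -- the two idempotents
  set q₁ : d ⟶ d := phi F G hFG hGF (p₁ ≫ i₁) with hq₁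
  set q₂ : d ⟶ d := phi F G hFG hGF (p₂ ≫ i₂) with hq₂
  have hqsum : q₁ + q₂ = 𝟙 d := by
    obtain ⟨w, hw⟩ := phi_surj hFG hGF (𝟙 d - (q₁ + q₂))
    have h1 : i₁ ≫ w = 0 := by
      apply phi_inj hFG hGF
      rw [phi_comp, hw, phi_zero]
      have e2 : phi F G hFG hGF i₁ ≫ q₁ = phi F G hFG hGF i₁ := by
        rw [hq₁, ← phi_comp, ← Category.assoc, r11, Category.id_comp]
      have e3 : phi F G hFG hGF i₁ ≫ q₂ = 0 := by
        rw [hq₂, ← phi_comp, ← Category.assoc, r12, zero_comp', phi_zero]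
      rw [comp_sub', comp_add', e2, e3, add_zero, Category.comp_id, sub_self]
    have h2 : i₂ ≫ w = 0 := by
      apply phi_inj hFG hGF
      rw [phi_comp, hw, phi_zero]
      have e2 : phi F G hFG hGF i₂ ≫ q₂ = phi F G hFG hGF i₂ := by
        rw [hq₂, ← phi_comp, ← Category.assoc, r22, Category.id_comp]
      have e3 : phi F G hFG hGF i₂ ≫ q₁ = 0 := by
        rw [hq₁, ← phi_comp, ← Category.assoc, r21, zero_comp', phi_zero]
      rw [comp_sub', comp_add', e2, e3, zero_add, Category.comp_id, sub_self]
    have hw0 : w = 0 := je w h1 h2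
    rw [hw0, phi_zero] at hw
    have := sub_eq_zero.mp hw.symm
    exact this.symm
  -- diagonal and codiagonal
  let Δ : a ⟶ d := (e.symm.toLinearMap).comp (LinearMap.prod LinearMap.id LinearMap.id)
  let Nb : d ⟶ b := p₁ ≫ f + p₂ ≫ g
  have hΔp₁ : Δ ≫ p₁ = 𝟙 a := by
    apply LinearMap.ext; intro x
    show (e (e.symm (x, x))).1 = x
    rw [e.apply_symm_apply]
  have hΔp₂ : Δ ≫ p₂ = 𝟙 a := by
    apply LinearMap.ext; intro x
    show (e (e.symm (x, x))).2 = x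
    rw [e.apply_symm_apply]
  have hi₁N : i₁ ≫ Nb = f := by
    rw [comp_add', ← Category.assoc, ← Category.assoc, r11, r12, Category.id_comp,
      zero_comp', add_zero]
  have hi₂N : i₂ ≫ Nb = g := by
    rw [comp_add', ← Category.assoc, ← Category.assoc, r21, r22, Category.id_comp,
      zero_comp', zero_add]
  have hΔN : Δ ≫ Nb = f + g := by
    rw [comp_add', ← Category.assoc, ← Category.assoc, hΔp₁, hΔp₂,
      Category.id_comp, Category.id_comp]
  have hfg1 : Δ ≫ (p₁ ≫ i₁) ≫ Nb = f := by
    rw [Category.assoc, hi₁N, ← Category.assoc, hΔp₁, Category.id_comp]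
  have hfg2 : Δ ≫ (p₂ ≫ i₂) ≫ Nb = g := by
    rw [Category.assoc, hi₂N, ← Category.assoc, hΔp₂, Category.id_comp]
  calc phi F G hFG hGF (f + g)
      = phi F G hFG hGF (Δ ≫ Nb) := by rw [hΔN]
    _ = phi F G hFG hGF Δ ≫ (q₁ + q₂) ≫ phi F G hFG hGF Nb := by
        rw [hqsum, Category.id_comp, ← phi_comp]
    _ = phi F G hFG hGF Δ ≫ (q₁ ≫ phi F G hFG hGF Nb + q₂ ≫ phi F G hFG hGF Nb) := by
        rw [add_comp']
    _ = phi F G hFG hGF (Δ ≫ (p₁ ≫ i₁) ≫ Nb) + phi F G hFG hGF (Δ ≫ (p₂ ≫ i₂) ≫ Nb) := by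
        rw [comp_add', hq₁, hq₂, ← phi_comp, ← phi_comp, ← phi_comp, ← phi_comp]
    _ = phi F G hFG hGF f + phi F G hFG hGF g := by rw [hfg1, hfg2]

end Phi2

section Hat

/-- the object `1` -/
abbrev I1 : FreeModCat K := ⟨1⟩

/-- the canonical basis vector of `K^1` -/
def one1 : Fin (I1 (K := K)).n → K := fun _ => 1

lemma vec_eq (t : Fin (I1 (K := K)).n → K) : t = t 0 • one1 := by
  funext i
  have : i = 0 := Fin.eq_zero i
  rw [this]
  show t 0 = t 0 * 1
  rw [mul_one]

/-- the morphism `1 ⟶ a` corresponding to a vector -/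
def hat {a : FreeModCat K} (x : Fin a.n → K) : I1 ⟶ a where
  toFun := fun t => t 0 • x
  map_add' := by
    intro t u
    show (t + u) 0 • x = t 0 • x + u 0 • x
    rw [Pi.add_apply, add_smul]
  map_smul' := by
    intro c t
    show (c • t) 0 • x = c • (t 0 • x)
    rw [Pi.smul_apply, smul_eq_mul, mul_smul]

lemma hat_one {a : FreeModCat K} (x : Fin a.n → K) : tl (hat x) one1 = x := by
  show (1 : K) • x = x
  rw [one_smul]

lemma hat_comp {a b : FreeModCat K} (f : a ⟶ b) (x : Fin a.n → K) :
    hat x ≫ f = hat (tl f x) := by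
  apply LinearMap.ext; intro t
  show tl f (t 0 • x) = t 0 • tl f x
  exact map_smul (tl f) _ _

lemma hat_repr {a : FreeModCat K} (g : I1 ⟶ a) : g = hat (tl g one1) := by
  apply LinearMap.ext; intro t
  show tl g t = t 0 • tl g one1
  conv_lhs => rw [vec_eq t]
  exact map_smul (tl g) _ _

lemma hat_add {a : FreeModCat K} (x y : Fin a.n → K) : hat (x + y) = hat x + hat y := by
  apply LinearMap.ext; intro t
  show t 0 • (x + y) = t 0 • x + t 0 • y
  rw [smul_add]

lemma hat_id : hat (one1 (K := K)) = 𝟙 (I1 (K := K)) := by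
  apply LinearMap.ext; intro t
  show t 0 • one1 = t
  exact (vec_eq t).symm

lemma hat_const_comp {a : FreeModCat K} (c : K) (x : Fin a.n → K) :
    hat (fun _ => c) ≫ hat x = hat (c • x) := by
  rw [hat_comp]
  rfl

end Hat

section Sigma

variable [IsNoetherianRing K] [Nontrivial K]
variable {F G : FreeModCat K ⥤ FreeModCat K}
variable (hFG : F ⋙ G = 𝟭 (FreeModCat K)) (hGF : G ⋙ F = 𝟭 (FreeModCat K))

/-- the semiisomorphism on `K^n`, before recasting -/
def sbar (a : FreeModCat K) (x : Fin a.n → K) : Fin a.n → K :=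
  tl (phi F G hFG hGF (hat x)) one1

lemma sbar_inv (a : FreeModCat K) (x : Fin a.n → K) :
    sbar hGF hFG a (sbar hFG hGF a x) = x := by
  unfold sbar
  rw [← hat_repr, phi_left_inv, hat_one]

lemma sbar_add (a : FreeModCat K) (x y : Fin a.n → K) :
    sbar hFG hGF a (x + y) = sbar hFG hGF a x + sbar hFG hGF a y := by
  unfold sbar
  rw [hat_add, phi_add, tl_add]

lemma sbar_nat {a b : FreeModCat K} (f : a ⟶ b) (x : Fin a.n → K) :
    tl (phi F G hFG hGF f) (sbar hFG hGF a x) = sbar hFG hGF b (tl f x) := by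
  unfold sbar
  rw [← tl_comp, ← phi_comp, hat_comp]

/-- the ring automorphism -/
def sig (c : K) : K := sbar hFG hGF I1 (fun _ => c) 0

lemma sbar_const (c : K) :
    sbar hFG hGF I1 (fun _ => c) = sig hFG hGF c • one1 := by
  conv_lhs => rw [vec_eq (sbar hFG hGF I1 (fun _ => c))]
  rfl

lemma sig_const (c : K) :
    (fun _ => sig hFG hGF c : Fin (I1 (K := K)).n → K) = sig hFG hGF c • one1 := by
  funext i
  show sig hFG hGF c = sig hFG hGF c * 1
  rw [mul_one]

lemma sbar_smul (a : FreeModCat K) (c : K) (x : Fin a.n → K) :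
    sbar hFG hGF a (c • x) = sig hFG hGF c • sbar hFG hGF a x := by
  have h1 : hat (c • x) = hat (fun _ => c) ≫ hat x := (hat_const_comp c x).symm
  unfold sbar
  rw [h1, phi_comp, tl_comp]
  have h2 : tl (phi F G hFG hGF (hat fun _ => c)) one1 = sig hFG hGF c • one1 :=
    sbar_const hFG hGF c
  rw [h2, map_smul]

lemma sig_one : sig hFG hGF (1 : K) = 1 := by
  have h : (fun _ => (1:K)) = one1 (K := K) := rfl
  unfold sig sbar
  rw [h, hat_id, phi_id]
  rfl

lemma sig_mul (c d : K) : sig hFG hGF (c * d) = sig hFG hGF c * sig hFG hGF d := by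
  have h1 : hat (a := I1) (fun _ => c * d)
      = hat (a := I1) (fun _ => c) ≫ hat (a := I1) (fun _ => (d:K)) := by
    rw [hat_const_comp]
    rfl
  have : sbar hFG hGF I1 (fun _ => c * d)
      = sig hFG hGF c • (sig hFG hGF d • one1) := by
    unfold sbar
    rw [h1, phi_comp, tl_comp]
    have h2 : tl (phi F G hFG hGF (hat fun _ => c)) one1 = sig hFG hGF c • one1 :=
      sbar_const hFG hGF c
    rw [h2, map_smul]
    have h3 : tl (phi F G hFG hGF (hat (a := I1) fun _ => (d:K))) one1
        = sig hFG hGF d • one1 := sbar_const hFG hGF d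
    rw [h3]
  unfold sig
  rw [this]
  show sig hFG hGF c * (sig hFG hGF d * 1) = _
  rw [mul_one]
  rfl

lemma sig_add (c d : K) : sig hFG hGF (c + d) = sig hFG hGF c + sig hFG hGF d := by
  have h : (fun _ => c + d : Fin (I1 (K := K)).n → K) = (fun _ => c) + (fun _ => (d:K)) := rfl
  unfold sig
  rw [h, sbar_add]
  rfl

lemma sig_inv (c : K) : sig hGF hFG (sig hFG hGF c) = c := by
  have h : (fun _ => sig hFG hGF c : Fin (I1 (K := K)).n → K)
      = sbar hFG hGF I1 (fun _ => c) := by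
    rw [sbar_const, sig_const]
  show sbar hGF hFG I1 (fun _ => sig hFG hGF c) 0 = c
  rw [h, sbar_inv]

end Sigma

end Main

/-- recasting along an equality of objects -/
def pcast {a b : FreeModCat K} (h : b = a) : (Fin a.n → K) ≃+ (Fin b.n → K) := by
  subst h; exact AddEquiv.refl _

lemma tl_eqToHom {x y : FreeModCat K} (h : x = y) (v : Fin x.n → K) :
    tl (eqToHom h) v = (pcast h).symm v := by
  subst h; rfl

lemma pcast_symm_apply {a b : FreeModCat K} (h : b = a) (v : Fin b.n → K) :
    (pcast h).symm v = pcast h.symm v := by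
  subst h; rfl

lemma pcast_smul {a b : FreeModCat K} (h : b = a) (c : K) (v : Fin a.n → K) :
    pcast h (c • v) = c • pcast h v := by
  subst h; rfl

lemma pcast_symm_symm {a b : FreeModCat K} (h : b = a) (v : Fin a.n → K) :
    (pcast h.symm).symm v = pcast h v := by
  subst h; rfl

end FMAux

open FMAux

/-- for a left noetherian ring `K`, every automorphism of the
category of finitely generated free left `K`-modules is semiinner. -/
theorem freeModCat_automorphism_semiinner [IsNoetherianRing K]
    (F : FreeModCat K ⥤ FreeModCat K)
    (h : ∃ G : FreeModCat K ⥤ FreeModCat K,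
      F ⋙ G = 𝟭 (FreeModCat K) ∧ G ⋙ F = 𝟭 (FreeModCat K)) :
    ∃ (σ : K ≃+* K)
      (s : ∀ a : FreeModCat K, (Fin a.n → K) ≃+ (Fin (F.obj a).n → K)),
      (∀ (a : FreeModCat K) (c : K) (x : Fin a.n → K),
          s a (c • x) = σ c • s a x) ∧
      (∀ (a b : FreeModCat K) (f : a ⟶ b) (x : Fin a.n → K),
          FreeModCat.toLinearMap K (F.map f) (s a x) =
            s b (FreeModCat.toLinearMap K f x)) := by
  obtain ⟨G, hFG, hGF⟩ := h
  rcases subsingleton_or_nontrivial K with hK | hK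
  · -- trivial ring: everything is zero
    refine ⟨RingEquiv.refl K, fun a =>
      { toFun := fun _ _ => 0
        invFun := fun _ _ => 0
        left_inv := fun x => Subsingleton.elim _ _
        right_inv := fun x => Subsingleton.elim _ _
        map_add' := fun x y => Subsingleton.elim _ _ }, ?_, ?_⟩
    · intro a c x
      exact Subsingleton.elim _ _
    · intro a b f x
      exact Subsingleton.elim _ _
  · -- nontrivial ring
    refine ⟨RingEquiv.ofBijective
      ({ toFun := sig hFG hGF
         map_one' := sig_one hFG hGF
         map_mul' := sig_mul hFG hGF
         map_zero' := by
           have := sig_add hFG hGF 0 0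
           rw [add_zero] at this
           exact left_eq_add.mp this
         map_add' := sig_add hFG hGF } : K →+* K)
      ⟨Function.LeftInverse.injective (g := sig hGF hFG) (sig_inv hFG hGF),
       Function.RightInverse.surjective (g := sig hGF hFG) (sig_inv hGF hFG)⟩,
      fun a =>
      ({ toFun := sbar hFG hGF a
         invFun := sbar hGF hFG a
         left_inv := sbar_inv hFG hGF a
         right_inv := sbar_inv hGF hFG a
         map_add' := sbar_add hFG hGF a } : (Fin a.n → K) ≃+ (Fin a.n → K)).trans
        (pcast (obj_eq F G hFG hGF a)), ?_, ?_⟩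
    · intro a c x
      show pcast (obj_eq F G hFG hGF a) (sbar hFG hGF a (c • x))
        = sig hFG hGF c • pcast (obj_eq F G hFG hGF a) (sbar hFG hGF a x)
      rw [sbar_smul, pcast_smul]
    · intro a b f x
      show FreeModCat.toLinearMap K (F.map f)
          (pcast (obj_eq F G hFG hGF a) (sbar hFG hGF a x))
        = pcast (obj_eq F G hFG hGF b) (sbar hFG hGF b (tl f x))
      have hnat := sbar_nat hFG hGF f x
      have hphi : tl (phi F G hFG hGF f) (sbar hFG hGF a x)
          = tl (eqToHom (obj_eq F G hFG hGF b))
              (tl (F.map f) (tl (eqToHom (obj_eq F G hFG hGF a).symm) (sbar hFG hGF a x))) := by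
        rfl
      rw [hphi] at hnat
      rw [tl_eqToHom ((obj_eq F G hFG hGF a).symm), pcast_symm_symm (obj_eq F G hFG hGF a)] at hnat
      rw [tl_eqToHom (obj_eq F G hFG hGF b)] at hnat
      rw [← hnat]
      exact (AddEquiv.apply_symm_apply _ _).symm
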